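/- Let q be a prime power, h ≥ 2, f : F_{q^h} → F_q a nonzero F_q-linear map, α ∈ F_{q^h} \ F_q, β ∈ F_{q^h}^*, and let L = {(x : f(x) + yα : yβ) : x ∈ F_{q^h}, y ∈ F_q, (x,y) ≠ (0,0)} ⊆ PG(2, q^h). Let φ be the projectivity (x:y:z) ↦ (z:x:y). Suppose (1) f(α/β) ≠ 1, and (2) for all k ∈ F_q, k ≠ f(α²/β) + (f(β²/(α+k)) + k)·f(α/β) + k·f(β²/(α+k))·f(1/β). Then L ∩ φ(L) = ∅, and consequently L, φ(L), φ²(L) are pairwise disjoint and their union is a 3-fold blocking set of size 3(q^h + q^{h-1} + 1). -/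

import Mathlib

/-- The relative trace `x ↦ x + x^q + ⋯ + x^{q^{h-1}}`. -/
def Tr (q h : ℕ) {K : Type*} [Field K] (x : K) : K :=
  ∑ i ∈ Finset.range h, x ^ q ^ i

/-- The line of `PG(2, K)` with equation `a 0 * X + a 1 * Y + a 2 * Z = 0`. -/
def projLine {K : Type*} [Field K] (a : Fin 3 → K) :
    Set (Projectivization K (Fin 3 → K)) :=
  {P | ∑ i, a i * P.rep i = 0}

/-- A subset of `PG(2, K)` is a line if it is `projLine a` for some nonzero `a`. -/
def IsLine {K : Type*} [Field K] (ℓ : Set (Projectivization K (Fin 3 → K))) : Prop :=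
  ∃ a : Fin 3 → K, a ≠ 0 ∧ ℓ = projLine a

/-- The trace-construction point set
`{(x : Tr(x) : y) : x ∈ F_{q^h}, y ∈ F_q, (x,y) ≠ (0,0)}` in `PG(2, q^h)`. -/
def traceSet (q h : ℕ) (F K : Type*) [Field F] [Field K] [Algebra F K] :
    Set (Projectivization K (Fin 3 → K)) :=
  {P | ∃ (x : K) (y : F), (x ≠ 0 ∨ y ≠ 0) ∧
    ∃ hv : (![x, Tr q h x, algebraMap F K y] : Fin 3 → K) ≠ 0,
      P = Projectivization.mk K (![x, Tr q h x, algebraMap F K y]) hv}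

section
variable {F K : Type*} [Field F] [Field K] [Algebra F K]

lemma memLine_mk (a : Fin 3 → K) (v : Fin 3 → K) (hv : v ≠ 0) :
    Projectivization.mk K v hv ∈ projLine a ↔ a 0 * v 0 + a 1 * v 1 + a 2 * v 2 = 0 := by
  obtain ⟨u, hu⟩ := Projectivization.exists_smul_eq_mk_rep K v hv
  constructor
  · intro hP
    have h0 : (∑ i, a i * (Projectivization.mk K v hv).rep i) = 0 := hP
    rw [← hu] at h0
    simp only [Fin.sum_univ_three, Pi.smul_apply, Units.smul_def, smul_eq_mul] at h0
    have : (u : K) * (a 0 * v 0 + a 1 * v 1 + a 2 * v 2) = 0 := by ring_nf; ring_nf at h0; linear_combination h0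
    rcases mul_eq_zero.1 this with h | h
    · exact absurd h u.ne_zero
    · exact h
  · intro hs
    show (∑ i, a i * (Projectivization.mk K v hv).rep i) = 0
    rw [← hu]
    simp only [Fin.sum_univ_three, Pi.smul_apply, Units.smul_def, smul_eq_mul]
    linear_combination (u : K) * hs
end

section
variable {K : Type*} [Field K]
lemma phi_mk (v : Fin 3 → K) (hv : v ≠ 0) (hw : (![v 2, v 0, v 1] : Fin 3 → K) ≠ 0) :
    Projectivization.map (LinearEquiv.funCongrLeft K K (finRotate 3).symm).toLinearMap
      (LinearEquiv.funCongrLeft K K (finRotate 3).symm).injective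
      (Projectivization.mk K v hv)
    = Projectivization.mk K (![v 2, v 0, v 1] : Fin 3 → K) hw := by
  rw [Projectivization.map_mk]
  congr 1
  funext i
  fin_cases i <;>
    simp [LinearEquiv.funCongrLeft_apply, LinearMap.funLeft_apply] <;> rfl

end

section
variable {F K : Type*} [Field F] [Field K] [Algebra F K]

lemma core (f : K →ₗ[F] F) (α β : K) (hα : α ∉ Set.range (algebraMap F K)) (hβ : β ≠ 0)
    (h1 : f (α / β) ≠ 1)
    (h2 : ∀ k : F, k ≠ f (α ^ 2 / β)
      + (f (β ^ 2 / (α + algebraMap F K k)) + k) * f (α / β)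
      + k * f (β ^ 2 / (α + algebraMap F K k)) * f (1 / β))
    (x x' : K) (y y' : F) (hxy : x ≠ 0 ∨ y ≠ 0) (hxy' : x' ≠ 0 ∨ y' ≠ 0)
    (l : K) (hl : l ≠ 0)
    (e1 : l * (algebraMap F K y' * β) = x)
    (e2 : l * x' = algebraMap F K (f x) + algebraMap F K y * α)
    (e3 : l * (algebraMap F K (f x') + algebraMap F K y' * α) = algebraMap F K y * β) :
    False := by
  set A := algebraMap F K with hA
  have hAinj : Function.Injective A := (algebraMap F K).injective
  have hA0 : ∀ s : F, A s = 0 ↔ s = 0 := fun s => by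
    rw [hA, map_eq_zero_iff _ hAinj]
  have hα0 : α ≠ 0 := fun h => hα ⟨0, by simp [h.symm]⟩
  have hαk : ∀ s : F, α + A s ≠ 0 := fun s h => hα ⟨-s, by
    rw [map_neg]; linear_combination -h⟩
  by_cases hy' : y' = 0
  · -- x = 0, so y ≠ 0
    subst hy'
    have hx0 : x = 0 := by rw [← e1]; simp
    have hy : y ≠ 0 := hxy.resolve_left (not_not_intro hx0)
    have hY : A y ≠ 0 := fun h => hy ((hA0 y).1 h)
    have e2' : l * x' = A y * α := by rw [e2, hx0, map_zero, map_zero, zero_add]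
    have e3' : l * A (f x') = A y * β := by rw [← e3]; ring_nf; rw [map_zero]; ring
    have hfx' : f x' ≠ 0 := by
      intro h
      rw [h, map_zero, mul_zero] at e3'
      rcases mul_eq_zero.1 e3'.symm with h | h
      · exact hY h
      · exact hβ h
    have key : (A y) * (x' * β) = (A y) * (A (f x') * α) := by
      linear_combination A (f x') * e2' - x' * e3'
    have key' : x' * β = A (f x') * α := mul_left_cancel₀ hY key
    have key2 : x' = (f x') • (α / β) := by
      rw [Algebra.smul_def]
      field_simp
      linear_combination key'
    have h5 := congrArg f key2
    rw [map_smul, smul_eq_mul] at h5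
    exact h1 (mul_left_cancel₀ hfx' (show f x' * f (α / β) = f x' * 1 by linear_combination -h5))
  · have hY' : A y' ≠ 0 := fun h => hy' ((hA0 y').1 h)
    by_cases hy : y = 0
    · subst hy
      have h3 : A (f x') + A y' * α = 0 := by
        have h4 : l * (A (f x') + A y' * α) = 0 := by rw [e3]; simp
        rcases mul_eq_zero.1 h4 with h | h
        · exact absurd h hl
        · exact h
      refine hα ⟨-(f x' / y'), ?_⟩
      rw [map_neg, map_div₀]
      field_simp
      linear_combination -h3
    · -- main case
      have hY : A y ≠ 0 := fun h => hy ((hA0 y).1 h)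
      set k : F := y'⁻¹ * f x' with hk
      have hAk : A (f x') = A y' * A k := by
        rw [hk, map_mul, map_inv₀]; field_simp
      have e3' : l * (A y' * (A k + α)) = A y * β := by
        rw [← e3, hAk]; ring
      have hstep : x * (A k + α) = A y * β ^ 2 := by
        linear_combination β * e3' - (A k + α) * e1
      have hka : α + A k ≠ 0 := hαk k
      set c : F := f (β ^ 2 / (α + A k)) with hc
      have hfx : f x = y * c := by
        have hxval : x = y • (β ^ 2 / (α + A k)) := by
          rw [Algebra.smul_def]
          field_simp
          linear_combination hstep
        rw [hxval, map_smul, smul_eq_mul, hc]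
      have hAfx : A (f x) = A y * A c := by rw [hfx, map_mul]
      have hxx' : x * x' = A y' * β * (A (f x) + A y * α) := by
        linear_combination (A y' * β) * e2 - x' * e1
      have t : (A y * β) * (β * x') = (A y * β) * (A y' * ((A c + α) * (α + A k))) := by
        linear_combination (A k + α) * hxx' - x' * hstep + A y' * β * (A k + α) * hAfx
      have hx'val : β * x' = A y' * ((A c + α) * (α + A k)) :=
        mul_left_cancel₀ (mul_ne_zero hY hβ) t
      have keyK : (y'⁻¹ • x' : K) = α ^ 2 / β + (c + k) • (α / β) + (c * k) • (1 / β) := by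
        simp only [Algebra.smul_def, map_inv₀, map_mul, map_add]
        rw [← hA]
        field_simp
        linear_combination hx'val
      have h6 := congrArg f keyK
      rw [map_smul, smul_eq_mul, map_add, map_add, map_smul, map_smul, smul_eq_mul,
        smul_eq_mul] at h6
      refine h2 k ?_
      have hk' : y'⁻¹ * f x' = k := hk.symm
      rw [hk'] at h6
      linear_combination h6
end

section
variable {F K : Type*} [Field F] [Field K] [Algebra F K] [Fintype F] [Fintype K]

lemma lineMeets (h : ℕ) (hh : 2 ≤ h) (hrank : Module.finrank F K = h)
    (f : K →ₗ[F] F) (α β : K) (a : Fin 3 → K) (ha : a ≠ 0) :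
    ∃ (x : K) (y : F), (x ≠ 0 ∨ y ≠ 0) ∧
      a 0 * x + a 1 * (algebraMap F K (f x) + algebraMap F K y * α)
        + a 2 * (algebraMap F K y * β) = 0 := by
  classical
  set A := algebraMap F K with hA
  let g : K × F →ₗ[F] K :=
    { toFun := fun p => a 0 * p.1 + A (f p.1) * a 1 + A p.2 * (a 1 * α + a 2 * β)
      map_add' := by intro p q; simp [map_add, hA]; ring
      map_smul' := by
        intro c p
        have h1 : (c • p).1 = A c * p.1 := by rw [Prod.smul_fst, hA, Algebra.smul_def]
        have h2 : (c • p).2 = c * p.2 := by rw [Prod.smul_snd, smul_eq_mul]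
        have hf : f (A c * p.1) = c * f p.1 := by
          rw [hA, ← Algebra.smul_def, map_smul, smul_eq_mul]
        have h3 : ∀ z : K, c • z = A c * z := fun z => by rw [hA, Algebra.smul_def]
        simp only [RingHom.id_apply, h1, h2, hf, map_mul, h3]
        ring }
  have hfin : Module.Finite F K := Module.Finite.of_finite
  have hnotinj : ¬ Function.Injective g := by
    intro hinj
    have h1 := LinearMap.finrank_le_finrank_of_injective hinj
    rw [Module.finrank_prod, hrank, Module.finrank_self] at h1
    omega
  obtain ⟨p, q, hpq, hne⟩ := Function.not_injective_iff.1 hnotinj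
  refine ⟨p.1 - q.1, p.2 - q.2, ?_, ?_⟩
  · by_contra hcon
    push_neg at hcon
    exact hne (Prod.ext (sub_eq_zero.1 hcon.1) (sub_eq_zero.1 hcon.2))
  · have hg : g (p - q) = 0 := by rw [map_sub, hpq, sub_self]
    have : g (p - q) = a 0 * (p.1 - q.1) + A (f (p.1 - q.1)) * a 1
        + A (p.2 - q.2) * (a 1 * α + a 2 * β) := rfl
    rw [this] at hg
    have hp1 : (p - q).1 = p.1 - q.1 := rfl
    linear_combination hg
end

section
variable {K : Type*} [Field K]

instance [Fintype K] : Finite (Projectivization K (Fin 3 → K)) := by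
  unfold Projectivization; exact Quotient.finite _

lemma mk_congr {v w : Fin 3 → K} (hv : v ≠ 0) (h : v = w) :
    Projectivization.mk K v hv = Projectivization.mk K w (h ▸ hv) := by subst h; rfl

lemma vne0 {u v w : K} (h : u ≠ 0) : (![u, v, w] : Fin 3 → K) ≠ 0 :=
  fun h0 => h (congrFun h0 0)
lemma vne1 {u v w : K} (h : v ≠ 0) : (![u, v, w] : Fin 3 → K) ≠ 0 :=
  fun h0 => h (congrFun h0 1)
lemma vne2 {u v w : K} (h : w ≠ 0) : (![u, v, w] : Fin 3 → K) ≠ 0 :=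
  fun h0 => h (congrFun h0 2)

def p0 (K : Type*) [Field K] : Projectivization K (Fin 3 → K) :=
  Projectivization.mk K ![(1 : K), 0, 0] (vne0 one_ne_zero)

lemma mk_eq_mk_of_eq {v w : Fin 3 → K} (hv : v ≠ 0) (hw : w ≠ 0) (h : v = w) :
    Projectivization.mk K v hv = Projectivization.mk K w hw := by subst h; rfl

lemma smul_vec3 (u : Kˣ) (a b c a' b' c' : K) (h1 : (u:K) * a = a')
    (h2 : (u:K) * b = b') (h3 : (u:K) * c = c') :
    u • ![a, b, c] = ![a', b', c'] := by
  funext i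
  fin_cases i <;> simp [Units.smul_def] <;> assumption

end
section
variable {F K : Type*} [Field F] [Field K] [Algebra F K] [Fintype F] [Fintype K]


def bmap (f : K →ₗ[F] F) (α β : K) (hβ : β ≠ 0) (x : K) : Projectivization K (Fin 3 → K) :=
  Projectivization.mk K ![x, algebraMap F K (f x) + α, β] (vne2 hβ)

def cmap (f : K →ₗ[F] F) (t : {t : K // f t = 1}) : Projectivization K (Fin 3 → K) :=
  Projectivization.mk K ![t.1, (1 : K), 0] (vne1 one_ne_zero)

lemma countL (q h : ℕ) (hcard : Fintype.card F = q)
    (hh : 2 ≤ h) (hrank : Module.finrank F K = h)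
    (f : K →ₗ[F] F) (hf : f ≠ 0) (α β : K) (hβ : β ≠ 0)
    (L : Set (Projectivization K (Fin 3 → K)))
    (hL : L = {P | ∃ (x : K) (y : F), (x ≠ 0 ∨ y ≠ 0) ∧
      ∃ hv : (![x, algebraMap F K (f x) + algebraMap F K y * α,
          algebraMap F K y * β] : Fin 3 → K) ≠ 0,
        P = Projectivization.mk K
          (![x, algebraMap F K (f x) + algebraMap F K y * α, algebraMap F K y * β]) hv}) :
    L.ncard = q ^ h + q ^ (h - 1) + 1 := by
  classical
  set A := algebraMap F K with hA
  have hAinj : Function.Injective A := (algebraMap F K).injective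
  have hA0 : ∀ s : F, A s = 0 ↔ s = 0 := fun s => by rw [hA, map_eq_zero_iff _ hAinj]
  haveI : FiniteDimensional F K := Module.Finite.of_finite
  obtain ⟨t₀, ht₀⟩ : ∃ t₀ : K, f t₀ ≠ 0 := by
    by_contra hcon
    push_neg at hcon
    exact hf (by ext z; simp [hcon z])
  have hsurj : Function.Surjective f := fun c => ⟨(c / f t₀) • t₀, by
    rw [map_smul, smul_eq_mul]; field_simp⟩
  have hker_rank : Module.finrank F (LinearMap.ker f) = h - 1 := by
    have h1 := LinearMap.finrank_range_add_finrank_ker f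
    rw [hrank] at h1
    have h2 : LinearMap.range f = ⊤ := LinearMap.range_eq_top.2 hsurj
    rw [h2, finrank_top, Module.finrank_self] at h1
    omega
  obtain ⟨x₂, hx₂k, hx₂⟩ : ∃ x₂ : K, f x₂ = 0 ∧ x₂ ≠ 0 := by
    have h3 : Module.finrank F (LinearMap.ker f) ≠ 0 := by omega
    have hne : LinearMap.ker f ≠ ⊥ := by
      intro hbot
      rw [hbot] at h3
      simp at h3
    obtain ⟨z, hz, hz0⟩ := Submodule.exists_mem_ne_zero_of_ne_bot hne
    exact ⟨z, hz, hz0⟩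
  obtain ⟨t₁, ht₁⟩ : ∃ t₁ : K, f t₁ = 1 := hsurj 1
  -- decomposition
  have hdecomp : L = Set.range (bmap f α β hβ) ∪ Set.range (cmap f) ∪ {p0 K} := by
    rw [hL]
    ext P
    constructor
    · rintro ⟨x, y, hxy, hv, rfl⟩
      by_cases hy : y = 0
      · subst hy
        have hx : x ≠ 0 := hxy.resolve_right (not_not_intro rfl)
        have hveq : (![x, A (f x) + A 0 * α, A 0 * β] : Fin 3 → K) = ![x, A (f x), 0] := by
          funext i; fin_cases i <;> simp
        by_cases hfx : f x = 0
        · right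
          show _ = p0 K
          rw [mk_congr hv hveq, p0, Projectivization.mk_eq_mk_iff]
          refine ⟨Units.mk0 x hx, smul_vec3 _ _ _ _ _ _ _ (mul_one _) (mul_zero _) (mul_zero _) |>.trans ?_⟩
          funext i; fin_cases i <;> simp [hfx, (hA0 (f x)).2 hfx]
        · left; right
          refine ⟨⟨(f x)⁻¹ • x, by rw [map_smul, smul_eq_mul, inv_mul_cancel₀ hfx]⟩, ?_⟩
          show _ = _
          rw [cmap, mk_congr hv hveq, Projectivization.mk_eq_mk_iff]
          have hAfx : A (f x) ≠ 0 := fun hc => hfx ((hA0 _).1 hc)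
          refine ⟨(Units.mk0 (A (f x)) hAfx)⁻¹, smul_vec3 _ _ _ _ _ _ _ ?_ ?_ ?_⟩
          · show (A (f x))⁻¹ * x = (f x)⁻¹ • x
            rw [Algebra.smul_def, map_inv₀]
          · show (A (f x))⁻¹ * A (f x) = 1
            rw [inv_mul_cancel₀ hAfx]
          · show (A (f x))⁻¹ * 0 = 0
            rw [mul_zero]
      · left; left
        refine ⟨y⁻¹ • x, ?_⟩
        show _ = _
        rw [bmap, Projectivization.mk_eq_mk_iff]
        have hY : A y ≠ 0 := fun hc => hy ((hA0 _).1 hc)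
        have hfs : f (y⁻¹ • x) = y⁻¹ * f x := by rw [map_smul, smul_eq_mul]
        refine ⟨(Units.mk0 (A y) hY)⁻¹, smul_vec3 _ _ _ _ _ _ _ ?_ ?_ ?_⟩
        · show (A y)⁻¹ * x = y⁻¹ • x
          rw [Algebra.smul_def, map_inv₀]
        · show (A y)⁻¹ * (A (f x) + A y * α) = A (f (y⁻¹ • x)) + α
          rw [hfs, map_mul, map_inv₀]
          field_simp
        · show (A y)⁻¹ * (A y * β) = β
          rw [← mul_assoc, inv_mul_cancel₀ hY, one_mul]
    · rintro ((⟨x, rfl⟩ | ⟨t, rfl⟩) | hP)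
      · refine ⟨x, 1, Or.inr one_ne_zero, ?_⟩
        have hveq : (![x, A (f x) + A 1 * α, A 1 * β] : Fin 3 → K)
            = ![x, A (f x) + α, β] := by
          funext i; fin_cases i <;> simp
        refine ⟨hveq ▸ (vne2 hβ), ?_⟩
        show bmap f α β hβ x = _
        rw [bmap, mk_congr (vne2 hβ) hveq.symm]
      · have htne : t.1 ≠ 0 := fun hc => by
          have := t.2; rw [hc, map_zero] at this; exact one_ne_zero this.symm
        refine ⟨t.1, 0, Or.inl htne, ?_⟩
        have hveq : (![t.1, A (f t.1) + A 0 * α, A 0 * β] : Fin 3 → K)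
            = ![t.1, (1:K), 0] := by
          funext i; fin_cases i <;> simp [t.2]
        refine ⟨hveq ▸ (vne1 one_ne_zero), ?_⟩
        show cmap f t = _
        rw [cmap, mk_congr (vne1 one_ne_zero) hveq.symm]
      · rcases hP with rfl
        refine ⟨x₂, 0, Or.inl hx₂, ?_⟩
        have hveq : (![x₂, A (f x₂) + A 0 * α, A 0 * β] : Fin 3 → K)
            = ![x₂, 0, 0] := by
          funext i; fin_cases i <;> simp [hx₂k]
        refine ⟨hveq ▸ (vne0 hx₂), ?_⟩
        show p0 K = _
        refine Eq.trans ?_ (mk_eq_mk_of_eq (vne0 hx₂) _ hveq.symm)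
        rw [p0, Projectivization.mk_eq_mk_iff]
        refine ⟨(Units.mk0 x₂ hx₂)⁻¹, smul_vec3 _ _ _ _ _ _ _ ?_ (mul_zero _) (mul_zero _)⟩
        show x₂⁻¹ * x₂ = 1
        rw [inv_mul_cancel₀ hx₂]
  -- injectivity
  have hbinj : Function.Injective (bmap f α β hβ) := by
    intro x₁ x₂ hb
    rw [bmap, bmap, Projectivization.mk_eq_mk_iff] at hb
    obtain ⟨u, hu⟩ := hb
    have h2 : (u : K) * β = β := by simpa [Units.smul_def] using congrFun hu 2
    have hu1 : (u : K) = 1 := mul_right_cancel₀ hβ (by rw [one_mul]; exact h2)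
    have h0 : (u : K) * x₂ = x₁ := by simpa [Units.smul_def] using congrFun hu 0
    rw [hu1, one_mul] at h0
    exact h0.symm
  have hcinj : Function.Injective (cmap f) := by
    intro t₁' t₂' hc
    rw [cmap, cmap, Projectivization.mk_eq_mk_iff] at hc
    obtain ⟨u, hu⟩ := hc
    have h2 : (u : K) * 1 = 1 := by simpa [Units.smul_def] using congrFun hu 1
    have hu1 : (u : K) = 1 := by rwa [mul_one] at h2
    have h0 : (u : K) * t₂'.1 = t₁'.1 := by simpa [Units.smul_def] using congrFun hu 0
    rw [hu1, one_mul] at h0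
    exact Subtype.ext h0.symm
  -- disjointness
  have hdisjbc : Disjoint (Set.range (bmap f α β hβ)) (Set.range (cmap f)) := by
    rw [Set.disjoint_left]
    rintro P ⟨x, rfl⟩ ⟨t, ht⟩
    rw [cmap, bmap, Projectivization.mk_eq_mk_iff] at ht
    obtain ⟨u, hu⟩ := ht
    have h2 : (u : K) * β = 0 := by simpa [Units.smul_def] using congrFun hu 2
    rcases mul_eq_zero.1 h2 with hc | hc
    · exact u.ne_zero hc
    · exact hβ hc
  have hdisjbp : Disjoint (Set.range (bmap f α β hβ)) ({p0 K} : Set _) := by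
    rw [Set.disjoint_left]
    rintro P ⟨x, rfl⟩ hP
    have h' : bmap f α β hβ x = p0 K := hP
    rw [bmap, p0, Projectivization.mk_eq_mk_iff] at h'
    obtain ⟨u, hu⟩ := h'
    have h2 : (u : K) * 0 = β := by simpa [Units.smul_def] using congrFun hu 2
    rw [mul_zero] at h2
    exact hβ h2.symm
  have hdisjcp : Disjoint (Set.range (cmap f)) ({p0 K} : Set _) := by
    rw [Set.disjoint_left]
    rintro P ⟨t, rfl⟩ hP0
    have hP : cmap f t = p0 K := hP0
    rw [cmap, p0, Projectivization.mk_eq_mk_iff] at hP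
    obtain ⟨u, hu⟩ := hP
    have h2 : (u : K) * 0 = 1 := by simpa [Units.smul_def] using congrFun hu 1
    rw [mul_zero] at h2
    exact one_ne_zero h2.symm
  -- cardinalities
  have hcardb : (Set.range (bmap f α β hβ)).ncard = q ^ h := by
    rw [← Set.image_univ, Set.ncard_image_of_injective _ hbinj, Set.ncard_univ,
      Nat.card_eq_fintype_card, Module.card_eq_pow_finrank (K := F) (V := K), hcard, hrank]
  have hcardc : (Set.range (cmap f)).ncard = q ^ (h - 1) := by
    rw [← Set.image_univ, Set.ncard_image_of_injective _ hcinj, Set.ncard_univ]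
    have hbij : Nat.card {t : K // f t = 1} = Nat.card (LinearMap.ker f) := by
      refine Nat.card_congr ⟨fun t => ⟨t.1 - t₁, ?_⟩, fun z => ⟨z.1 + t₁, ?_⟩, ?_, ?_⟩
      · simp [LinearMap.mem_ker, map_sub, t.2, ht₁]
      · have := z.2
        rw [LinearMap.mem_ker] at this
        simp [map_add, this, ht₁]
      · intro t; ext; simp
      · intro z; ext; simp
    rw [hbij]
    haveI : Fintype (LinearMap.ker f) := Fintype.ofFinite _
    rw [Nat.card_eq_fintype_card, Module.card_eq_pow_finrank (K := F) (V := LinearMap.ker f),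
      hcard, hker_rank]
  rw [hdecomp, Set.ncard_union_eq (by
      rw [Set.disjoint_union_left]; exact ⟨hdisjbp, hdisjcp⟩) (Set.toFinite _) (Set.toFinite _),
    Set.ncard_union_eq hdisjbc (Set.toFinite _) (Set.toFinite _),
    hcardb, hcardc, Set.ncard_singleton]
end


/-- With `φ : (x:y:z) ↦ (z:x:y)` and conditions (1)–(2) on `f, α, β`,
the set `L = {(x : f(x)+yα : yβ)}` is disjoint from `φ(L)`; hence `L, φ(L), φ²(L)` are
pairwise disjoint and their union is a 3-fold blocking set of size
`3(q^h + q^(h-1) + 1)`. -/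
theorem stmt_14 {F K : Type*} [Field F] [Field K] [Algebra F K]
    [Fintype F] [Fintype K]
    (q h : ℕ) (hq : IsPrimePow q) (hcard : Fintype.card F = q)
    (hh : 2 ≤ h) (hrank : Module.finrank F K = h)
    (f : K →ₗ[F] F) (hf : f ≠ 0)
    (α β : K) (hα : α ∉ Set.range (algebraMap F K)) (hβ : β ≠ 0)
    (L : Set (Projectivization K (Fin 3 → K)))
    (hL : L = {P | ∃ (x : K) (y : F), (x ≠ 0 ∨ y ≠ 0) ∧
      ∃ hv : (![x, algebraMap F K (f x) + algebraMap F K y * α,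
          algebraMap F K y * β] : Fin 3 → K) ≠ 0,
        P = Projectivization.mk K
          (![x, algebraMap F K (f x) + algebraMap F K y * α, algebraMap F K y * β]) hv})
    (φ : Projectivization K (Fin 3 → K) → Projectivization K (Fin 3 → K))
    (hφ : φ = Projectivization.map
      (LinearEquiv.funCongrLeft K K (finRotate 3).symm).toLinearMap
      (LinearEquiv.funCongrLeft K K (finRotate 3).symm).injective)
    (h1 : f (α / β) ≠ 1)
    (h2 : ∀ k : F, k ≠ f (α ^ 2 / β)
      + (f (β ^ 2 / (α + algebraMap F K k)) + k) * f (α / β)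
      + k * f (β ^ 2 / (α + algebraMap F K k)) * f (1 / β)) :
    L ∩ φ '' L = ∅ ∧
    Disjoint L (φ '' L) ∧ Disjoint L (φ '' (φ '' L)) ∧
    Disjoint (φ '' L) (φ '' (φ '' L)) ∧
    (∀ a : Fin 3 → K, a ≠ 0 →
      3 ≤ (projLine a ∩ (L ∪ φ '' L ∪ φ '' (φ '' L))).ncard) ∧
    (L ∪ φ '' L ∪ φ '' (φ '' L)).ncard = 3 * (q ^ h + q ^ (h - 1) + 1) := by
    classical
  set A := algebraMap F K with hA
  have hAinj : Function.Injective A := (algebraMap F K).injective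
  have hperm : ∀ v : Fin 3 → K, v ≠ 0 → (![v 2, v 0, v 1] : Fin 3 → K) ≠ 0 := by
    intro v hv h0
    apply hv
    funext i
    fin_cases i
    · exact congrFun h0 1
    · exact congrFun h0 2
    · exact congrFun h0 0
  have hphi : ∀ (v : Fin 3 → K) (hv : v ≠ 0), φ (Projectivization.mk K v hv) =
      Projectivization.mk K ![v 2, v 0, v 1] (hperm v hv) := by
    intro v hv; rw [hφ]; exact phi_mk v hv (hperm v hv)
  -- disjointness of L and φ '' L
  have hdisj : ∀ P, P ∈ L → P ∈ φ '' L → False := by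
    intro P hPL hPφ
    rw [hL] at hPL
    obtain ⟨x, y, hxy, hv, rfl⟩ := hPL
    obtain ⟨Q, hQ, hQP⟩ := hPφ
    rw [hL] at hQ
    obtain ⟨x', y', hxy', hv', rfl⟩ := hQ
    rw [hphi _ hv', Projectivization.mk_eq_mk_iff] at hQP
    obtain ⟨u, hu⟩ := hQP
    have c0 : (u : K) * x = A y' * β := by simpa [Units.smul_def] using congrFun hu 0
    have hu_inv : ((u : K))⁻¹ * (u : K) = 1 := inv_mul_cancel₀ u.ne_zero
    have c1 : (u : K) * (A (f x) + A y * α) = x' := by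
      have h' := congrFun hu 1
      simp [Units.smul_def] at h'
      linear_combination h'
    have c2 : (u : K) * (A y * β) = A (f x') + A y' * α := by
      have h' := congrFun hu 2
      simp [Units.smul_def] at h'
      linear_combination h'
    refine core f α β hα hβ h1 h2 x x' y y' hxy hxy' ((u : K))⁻¹
      (inv_ne_zero u.ne_zero) ?_ ?_ ?_
    · linear_combination x * hu_inv - ((u : K))⁻¹ * c0
    · linear_combination (A (f x) + A y * α) * hu_inv - ((u : K))⁻¹ * c1
    · linear_combination (A y * β) * hu_inv - ((u : K))⁻¹ * c2
  have hint : L ∩ φ '' L = ∅ := by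
    ext P
    simp only [Set.mem_inter_iff, Set.mem_empty_iff_false, iff_false, not_and]
    exact fun hp hq' => hdisj P hp hq'
  have d1 : Disjoint L (φ '' L) := Set.disjoint_iff_inter_eq_empty.2 hint
  -- φ has order 3
  have hφ3 : ∀ P, φ (φ (φ P)) = P := by
    intro P
    induction P using Projectivization.ind with
    | h v hv =>
      rw [hphi v hv, hphi _ (hperm v hv), hphi _ (hperm _ (hperm v hv))]
      refine mk_eq_mk_of_eq _ _ ?_
      funext i
      fin_cases i <;> simp
  have hinj : Function.Injective φ :=
    Function.LeftInverse.injective (g := φ ∘ φ) (fun P => hφ3 P)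
  have himg : φ '' (φ '' (φ '' L)) = L := by
    rw [Set.image_image, Set.image_image]
    simp only [hφ3]
    exact Set.image_id L
  have d2 : Disjoint (φ '' L) (φ '' (φ '' L)) := (Set.disjoint_image_iff hinj).2 d1
  have d3 : Disjoint L (φ '' (φ '' L)) := by
    have hd := (Set.disjoint_image_iff hinj).2 d2
    rw [himg] at hd
    exact hd.symm
  refine ⟨hint, d1, d3, d2, ?_, ?_⟩
  · -- blocking
    intro a ha
    -- point on L
    obtain ⟨x1, y1, hxy1, hline1⟩ := lineMeets h hh hrank f α β a ha
    have hv1 : (![x1, A (f x1) + A y1 * α, A y1 * β] : Fin 3 → K) ≠ 0 := by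
      rcases hxy1 with hx | hy
      · exact vne0 hx
      · exact vne2 (mul_ne_zero (fun hc => hy ((map_eq_zero_iff _ hAinj).1 hc)) hβ)
    set P1 := Projectivization.mk K _ hv1 with hP1def
    have hP1L : P1 ∈ L := hL ▸ ⟨x1, y1, hxy1, hv1, rfl⟩
    have hP1line : P1 ∈ projLine a := by
      rw [hP1def, memLine_mk]
      simpa using hline1
    -- point on φ '' L
    have ha' : (![a 1, a 2, a 0] : Fin 3 → K) ≠ 0 := by
      intro hc
      apply ha
      funext i
      fin_cases i
      · exact congrFun hc 2
      · exact congrFun hc 0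
      · exact congrFun hc 1
    obtain ⟨x2, y2, hxy2, hline2⟩ := lineMeets h hh hrank f α β _ ha'
    have hv2 : (![x2, A (f x2) + A y2 * α, A y2 * β] : Fin 3 → K) ≠ 0 := by
      rcases hxy2 with hx | hy
      · exact vne0 hx
      · exact vne2 (mul_ne_zero (fun hc => hy ((map_eq_zero_iff _ hAinj).1 hc)) hβ)
    set Q2 := Projectivization.mk K _ hv2 with hQ2def
    have hQ2L : Q2 ∈ L := hL ▸ ⟨x2, y2, hxy2, hv2, rfl⟩
    set P2 := φ Q2 with hP2def
    have hP2mem : P2 ∈ φ '' L := ⟨Q2, hQ2L, rfl⟩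
    have hP2line : P2 ∈ projLine a := by
      rw [hP2def, hQ2def, hphi _ hv2, memLine_mk]
      simp only [Matrix.cons_val_zero, Matrix.cons_val_one, Matrix.head_cons,
        Matrix.cons_val_two, Matrix.tail_cons]
      simp only [Matrix.cons_val_zero, Matrix.cons_val_one, Matrix.head_cons,
        Matrix.cons_val_two, Matrix.tail_cons] at hline2
      linear_combination hline2
    -- point on φ '' (φ '' L)
    have ha'' : (![a 2, a 0, a 1] : Fin 3 → K) ≠ 0 := by
      intro hc
      apply ha
      funext i
      fin_cases i
      · exact congrFun hc 1
      · exact congrFun hc 2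
      · exact congrFun hc 0
    obtain ⟨x3, y3, hxy3, hline3⟩ := lineMeets h hh hrank f α β _ ha''
    have hv3 : (![x3, A (f x3) + A y3 * α, A y3 * β] : Fin 3 → K) ≠ 0 := by
      rcases hxy3 with hx | hy
      · exact vne0 hx
      · exact vne2 (mul_ne_zero (fun hc => hy ((map_eq_zero_iff _ hAinj).1 hc)) hβ)
    set Q3 := Projectivization.mk K _ hv3 with hQ3def
    have hQ3L : Q3 ∈ L := hL ▸ ⟨x3, y3, hxy3, hv3, rfl⟩
    set P3 := φ (φ Q3) with hP3def
    have hP3mem : P3 ∈ φ '' (φ '' L) := ⟨φ Q3, ⟨Q3, hQ3L, rfl⟩, rfl⟩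
    have hP3line : P3 ∈ projLine a := by
      rw [hP3def, hQ3def, hphi _ hv3, hphi _ (hperm _ hv3), memLine_mk]
      simp only [Matrix.cons_val_zero, Matrix.cons_val_one, Matrix.head_cons,
        Matrix.cons_val_two, Matrix.tail_cons]
      simp only [Matrix.cons_val_zero, Matrix.cons_val_one, Matrix.head_cons,
        Matrix.cons_val_two, Matrix.tail_cons] at hline3
      linear_combination hline3
    have ne12 : P1 ≠ P2 := fun he => Set.disjoint_left.1 d1 hP1L (he ▸ hP2mem)
    have ne13 : P1 ≠ P3 := fun he => Set.disjoint_left.1 d3 hP1L (he ▸ hP3mem)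
    have ne23 : P2 ≠ P3 := fun he => Set.disjoint_left.1 d2 hP2mem (he ▸ hP3mem)
    have hsub : ({P1, P2, P3} : Set _) ⊆ projLine a ∩ (L ∪ φ '' L ∪ φ '' (φ '' L)) := by
      rintro P (rfl | rfl | rfl)
      · exact ⟨hP1line, Or.inl (Or.inl hP1L)⟩
      · exact ⟨hP2line, Or.inl (Or.inr hP2mem)⟩
      · exact ⟨hP3line, Or.inr hP3mem⟩
    calc (3 : ℕ) = ({P1, P2, P3} : Set _).ncard :=
          (Set.ncard_eq_three.2 ⟨P1, P2, P3, ne12, ne13, ne23, rfl⟩).symm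
      _ ≤ _ := Set.ncard_le_ncard hsub (Set.toFinite _)
  · -- cardinality
    have hNL : L.ncard = q ^ h + q ^ (h - 1) + 1 := countL q h hcard hh hrank f hf α β hβ L hL
    have hN2 : (φ '' L).ncard = q ^ h + q ^ (h - 1) + 1 := by
      rw [Set.ncard_image_of_injective _ hinj, hNL]
    have hN3 : (φ '' (φ '' L)).ncard = q ^ h + q ^ (h - 1) + 1 := by
      rw [Set.ncard_image_of_injective _ hinj, hN2]
    rw [Set.ncard_union_eq (Set.disjoint_union_left.2 ⟨d3, d2⟩) (Set.toFinite _)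
        (Set.toFinite _),
      Set.ncard_union_eq d1 (Set.toFinite _) (Set.toFinite _), hNL, hN2, hN3]
    ring
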